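/- arXiv:2011.10065 — 2 statements merged into one kernel-verified Lean document; each statement's English description precedes it below -/
import Mathlib

section
/- Let T = H^{-1/2} S H^{1/2} with H symmetric positive definite and S symmetric, let x* = T x* + b, and let x^{(k+1)} = T x^{(k)} + b. Then for any c ∈ ℝ^k with ∑_{i=1}^k c_i = 1, letting x_e = ∑_{i=1}^k c_i x^{(i-1)}, one has ‖(T - Id)(x_e - x*)‖ ≤ √κ(H) · ‖∑_{i=1}^k c_i S^{i-1}‖ · ‖(T - Id)(x^{(0)} - x*)‖. -/
open Matrix

/-- Euclidean norm of a vector in `ℝ^p`. -/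
noncomputable def eNorm {p : ℕ} (v : Fin p → ℝ) : ℝ := Real.sqrt (∑ i, v i ^ 2)

/-- Operator (spectral) norm of a real `p × p` matrix. -/
noncomputable def opNorm {p : ℕ} (M : Matrix (Fin p) (Fin p) ℝ) : ℝ :=
  ‖Matrix.toEuclideanCLM (𝕜 := ℝ) M‖

/-- Condition number of a symmetric matrix: largest eigenvalue over smallest. -/
noncomputable def condNum {p : ℕ} {H : Matrix (Fin p) (Fin p) ℝ} (hH : H.IsHermitian) : ℝ :=
  (⨆ i, hH.eigenvalues i) / (⨅ i, hH.eigenvalues i)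

/-- The positive semidefinite square root of a positive semidefinite matrix
(the definition removed from Mathlib, restored with its old meaning). -/
noncomputable def Matrix.PosSemidef.sqrt {n : Type*} [Fintype n] [DecidableEq n]
    {A : Matrix n n ℝ} (hA : A.PosSemidef) : Matrix n n ℝ :=
  (hA.1.eigenvectorUnitary : Matrix n n ℝ) *
    Matrix.diagonal ((fun x : ℝ => Real.sqrt x) ∘ hA.1.eigenvalues) *
    (star hA.1.eigenvectorUnitary : Matrix n n ℝ)

lemma aux_psd_sqrt_isHermitian {n : Type*} [Fintype n] [DecidableEq n]
    {A : Matrix n n ℝ} (hA : A.PosSemidef) : hA.sqrt.IsHermitian := by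
  simp only [Matrix.IsHermitian, Matrix.PosSemidef.sqrt, Matrix.conjTranspose_mul,
    Matrix.diagonal_conjTranspose, Unitary.coe_star, Matrix.star_eq_conjTranspose,
    Matrix.conjTranspose_conjTranspose, Matrix.mul_assoc, star_trivial]

theorem Matrix.PosSemidef.sqrt_mul_self {n : Type*} [Fintype n] [DecidableEq n]
    {A : Matrix n n ℝ} (hA : A.PosSemidef) : hA.sqrt * hA.sqrt = A := by
  have h1 := Unitary.coe_star_mul_self hA.1.eigenvectorUnitary
  unfold Matrix.PosSemidef.sqrt
  rw [show ∀ U D V : Matrix n n ℝ, U * D * V * (U * D * V) = U * (D * (V * U) * D) * V by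
    intro U D V; simp only [Matrix.mul_assoc], h1, Matrix.mul_one, Matrix.diagonal_mul_diagonal]
  conv_rhs => rw [hA.1.spectral_theorem, Unitary.conjStarAlgAut_apply]
  congr 3
  ext i
  simp [Real.mul_self_sqrt (hA.eigenvalues_nonneg i)]

section Aux

variable {p : ℕ}

lemma aux_dot_eq_sum_sq (v : Fin p → ℝ) : v ⬝ᵥ v = ∑ i, v i ^ 2 := by
  simp [dotProduct, sq]

lemma aux_eNorm_eq_sqrt_dot (v : Fin p → ℝ) : eNorm v = Real.sqrt (v ⬝ᵥ v) := by
  rw [eNorm, aux_dot_eq_sum_sq]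

lemma aux_dot_self_nonneg (v : Fin p → ℝ) : 0 ≤ v ⬝ᵥ v := by
  rw [aux_dot_eq_sum_sq]
  exact Finset.sum_nonneg fun i _ => sq_nonneg _

lemma aux_eNorm_eq (v : Fin p → ℝ) :
    eNorm v = ‖((WithLp.equiv 2 (Fin p → ℝ)).symm v : EuclideanSpace ℝ (Fin p))‖ := by
  rw [EuclideanSpace.norm_eq]
  simp [eNorm, Real.norm_eq_abs, sq_abs]

lemma aux_eNorm_nonneg (v : Fin p → ℝ) : 0 ≤ eNorm v := Real.sqrt_nonneg _

lemma aux_eNorm_mulVec_le (M : Matrix (Fin p) (Fin p) ℝ) (v : Fin p → ℝ) :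
    eNorm (M *ᵥ v) ≤ opNorm M * eNorm v := by
  have h := (Matrix.toEuclideanCLM (𝕜 := ℝ) M).le_opNorm ((WithLp.equiv 2 (Fin p → ℝ)).symm v)
  rw [WithLp.equiv_symm_apply, Matrix.toEuclideanCLM_toLp] at h
  rw [aux_eNorm_eq, aux_eNorm_eq]
  exact h

lemma aux_sum_mulVec {k : ℕ} (M : Fin k → Matrix (Fin p) (Fin p) ℝ) (v : Fin p → ℝ) :
    (∑ i, M i) *ᵥ v = ∑ i, (M i) *ᵥ v := by
  ext j
  simp only [Matrix.mulVec, dotProduct, Matrix.sum_apply, Finset.sum_apply,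
    Finset.sum_mul]
  rw [Finset.sum_comm]

lemma aux_rayleigh_gen {A : Matrix (Fin p) (Fin p) ℝ} (hA : A.IsHermitian)
    (v : Fin p → ℝ) :
    ∃ w : Fin p → ℝ, v ⬝ᵥ A *ᵥ v = ∑ i, hA.eigenvalues i * w i ^ 2 ∧ w ⬝ᵥ w = v ⬝ᵥ v := by
  classical
  set U : Matrix (Fin p) (Fin p) ℝ := (hA.eigenvectorUnitary : Matrix (Fin p) (Fin p) ℝ) with hU
  have hstar : star U = Uᵀ := by
    rw [Matrix.star_eq_conjTranspose, conjTranspose_eq_transpose_of_trivial]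
  set w : Fin p → ℝ := Uᵀ *ᵥ v with hw
  have hUU : U * Uᵀ = 1 := by
    have := (Matrix.mem_unitaryGroup_iff).mp hA.eigenvectorUnitary.2
    rwa [hstar] at this
  have hvU : v ᵥ* U = w := by rw [hw, ← mulVec_transpose]
  refine ⟨w, ?_, ?_⟩
  · conv_lhs => rw [hA.spectral_theorem, Unitary.conjStarAlgAut_apply]
    rw [hstar, ← mulVec_mulVec, ← mulVec_mulVec, dotProduct_mulVec, hvU, ← hw, dotProduct]
    refine Finset.sum_congr rfl fun i _ => ?_
    rw [mulVec_diagonal]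
    simp only [Function.comp_apply, RCLike.ofReal_real_eq_id, id_eq, sq]
    ring
  · rw [hw, dotProduct_mulVec, ← mulVec_transpose, transpose_transpose, mulVec_mulVec, hUU,
      one_mulVec]

lemma aux_rayleigh_upper {A : Matrix (Fin p) (Fin p) ℝ} (hA : A.IsHermitian) (v : Fin p → ℝ) :
    v ⬝ᵥ A *ᵥ v ≤ (⨆ i, hA.eigenvalues i) * (v ⬝ᵥ v) := by
  obtain ⟨w, h1, h2⟩ := aux_rayleigh_gen hA v
  rw [h1, ← h2, aux_dot_eq_sum_sq, Finset.mul_sum]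
  refine Finset.sum_le_sum fun i _ => ?_
  exact mul_le_mul_of_nonneg_right
    (le_ciSup (Set.Finite.bddAbove (Set.finite_range _)) i) (sq_nonneg _)

lemma aux_rayleigh_lower {A : Matrix (Fin p) (Fin p) ℝ} (hA : A.IsHermitian) (v : Fin p → ℝ) :
    (⨅ i, hA.eigenvalues i) * (v ⬝ᵥ v) ≤ v ⬝ᵥ A *ᵥ v := by
  obtain ⟨w, h1, h2⟩ := aux_rayleigh_gen hA v
  rw [h1, ← h2, aux_dot_eq_sum_sq, Finset.mul_sum]
  refine Finset.sum_le_sum fun i _ => ?_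
  exact mul_le_mul_of_nonneg_right
    (ciInf_le (Set.Finite.bddBelow (Set.finite_range _)) i) (sq_nonneg _)

lemma aux_opNorm_mul_le (A B : Matrix (Fin p) (Fin p) ℝ) :
    opNorm (A * B) ≤ opNorm A * opNorm B := by
  unfold opNorm
  rw [_root_.map_mul]
  exact norm_mul_le _ _

end Aux

section SqrtBounds

variable {p : ℕ} {H : Matrix (Fin p) (Fin p) ℝ} (hH : H.PosDef)

lemma aux_sqrt_symm : (hH.posSemidef.sqrt)ᵀ = hH.posSemidef.sqrt := by
  have := aux_psd_sqrt_isHermitian hH.posSemidef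
  rwa [Matrix.IsHermitian, Matrix.conjTranspose_eq_transpose_of_trivial] at this

lemma aux_sqrt_det_isUnit : IsUnit (hH.posSemidef.sqrt).det := by
  have hm : (hH.posSemidef.sqrt).det * (hH.posSemidef.sqrt).det = H.det := by
    rw [← Matrix.det_mul, hH.posSemidef.sqrt_mul_self]
  have hd := hH.det_pos
  rw [isUnit_iff_ne_zero]
  intro h
  rw [h, mul_zero] at hm
  exact hd.ne' hm.symm

lemma aux_sqrt_mulVec_bound (u : Fin p → ℝ) :
    eNorm (hH.posSemidef.sqrt *ᵥ u) ≤
      Real.sqrt (⨆ i, hH.isHermitian.eigenvalues i) * eNorm u := by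
  set B := hH.posSemidef.sqrt with hB
  have hdot : (B *ᵥ u) ⬝ᵥ (B *ᵥ u) = u ⬝ᵥ H *ᵥ u := by
    rw [dotProduct_mulVec, ← mulVec_transpose, aux_sqrt_symm hH, ← hB, mulVec_mulVec,
      hH.posSemidef.sqrt_mul_self, dotProduct_comm, dotProduct_mulVec]
  calc eNorm (B *ᵥ u) = Real.sqrt ((B *ᵥ u) ⬝ᵥ (B *ᵥ u)) := aux_eNorm_eq_sqrt_dot _
    _ ≤ Real.sqrt ((⨆ i, hH.isHermitian.eigenvalues i) * (u ⬝ᵥ u)) := by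
        rw [hdot]
        exact Real.sqrt_le_sqrt (aux_rayleigh_upper hH.isHermitian u)
    _ = Real.sqrt (⨆ i, hH.isHermitian.eigenvalues i) * eNorm u := by
        rw [Real.sqrt_mul' _ (aux_dot_self_nonneg u), aux_eNorm_eq_sqrt_dot]

lemma aux_sqrt_inv_mulVec_bound (z : Fin p → ℝ)
    (hμ : 0 < ⨅ i, hH.isHermitian.eigenvalues i) :
    eNorm ((hH.posSemidef.sqrt)⁻¹ *ᵥ z) ≤
      (Real.sqrt (⨅ i, hH.isHermitian.eigenvalues i))⁻¹ * eNorm z := by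
  set B := hH.posSemidef.sqrt with hB
  set R := B⁻¹ with hR
  set μ := ⨅ i, hH.isHermitian.eigenvalues i with hμdef
  have hdet := aux_sqrt_det_isUnit hH
  have hRsymm : Rᵀ = R := by rw [hR, Matrix.transpose_nonsing_inv, aux_sqrt_symm hH]
  have hRHR : R * H * R = 1 := by
    rw [← hH.posSemidef.sqrt_mul_self, ← hB, ← Matrix.mul_assoc, Matrix.mul_assoc (R * B),
      Matrix.nonsing_inv_mul B hdet, Matrix.mul_nonsing_inv B hdet, Matrix.mul_one]
  have hdot : (R *ᵥ z) ⬝ᵥ H *ᵥ (R *ᵥ z) = z ⬝ᵥ z := by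
    have hHsymm : Hᵀ = H := by
      rw [← Matrix.conjTranspose_eq_transpose_of_trivial]; exact hH.isHermitian
    rw [mulVec_mulVec, dotProduct_mulVec, ← mulVec_transpose, Matrix.transpose_mul, hRsymm,
      hHsymm, mulVec_mulVec, hRHR, one_mulVec]
  have hle : μ * ((R *ᵥ z) ⬝ᵥ (R *ᵥ z)) ≤ z ⬝ᵥ z := by
    rw [← hdot]
    exact aux_rayleigh_lower hH.isHermitian _
  have h2 : (R *ᵥ z) ⬝ᵥ (R *ᵥ z) ≤ (z ⬝ᵥ z) / μ := by
    rw [le_div_iff₀ hμ]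
    linarith [hle]
  calc eNorm (R *ᵥ z) = Real.sqrt ((R *ᵥ z) ⬝ᵥ (R *ᵥ z)) := aux_eNorm_eq_sqrt_dot _
    _ ≤ Real.sqrt ((z ⬝ᵥ z) / μ) := Real.sqrt_le_sqrt h2
    _ = (Real.sqrt μ)⁻¹ * eNorm z := by
        rw [Real.sqrt_div (aux_dot_self_nonneg z), aux_eNorm_eq_sqrt_dot, div_eq_inv_mul]

end SqrtBounds

theorem stmt_5 {p k : ℕ} (H S : Matrix (Fin p) (Fin p) ℝ)
    (hH : H.PosDef) (hS : S.IsHermitian)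
    (T : Matrix (Fin p) (Fin p) ℝ)
    (hT : T = (hH.posSemidef.sqrt)⁻¹ * S * hH.posSemidef.sqrt)
    (b xstar : Fin p → ℝ) (hfix : T.mulVec xstar + b = xstar)
    (x : ℕ → Fin p → ℝ) (hx : ∀ m, x (m + 1) = T.mulVec (x m) + b)
    (c : Fin k → ℝ) (hc : ∑ i, c i = 1) :
    eNorm ((T - 1).mulVec ((∑ i : Fin k, c i • x i) - xstar)) ≤
      Real.sqrt (condNum hH.isHermitian) * opNorm (∑ i : Fin k, c i • S ^ (i : ℕ)) *
        eNorm ((T - 1).mulVec (x 0 - xstar)) := by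
  classical
  rcases Nat.eq_zero_or_pos p with hp | hp
  · subst hp
    have h0 : ∀ v : Fin 0 → ℝ, eNorm v = 0 := fun v => by simp [eNorm]
    rw [h0, h0, mul_zero]
  -- notation
  set B := hH.posSemidef.sqrt with hB
  set R := B⁻¹ with hR
  set w : Fin p → ℝ := x 0 - xstar with hw
  have hdet := aux_sqrt_det_isUnit hH
  -- eigenvalue facts
  set μmax := ⨆ i, hH.isHermitian.eigenvalues i with hμmax
  set μmin := ⨅ i, hH.isHermitian.eigenvalues i with hμmin
  have hne : Nonempty (Fin p) := ⟨⟨0, hp⟩⟩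
  have hμminpos : 0 < μmin := by
    rw [hμmin]
    obtain ⟨i₀, hi₀⟩ := Finite.exists_min hH.isHermitian.eigenvalues
    exact lt_of_lt_of_le (hH.eigenvalues_pos i₀) (le_ciInf hi₀)
  have hμmaxnn : 0 ≤ μmax := by
    rw [hμmax]
    exact le_trans (hH.eigenvalues_pos (⟨0, hp⟩ : Fin p)).le
      (le_ciSup (Set.Finite.bddAbove (Set.finite_range _)) (⟨0, hp⟩ : Fin p))
  -- error propagation
  have herr : ∀ m, x m - xstar = (T ^ m) *ᵥ w := by
    intro m
    induction m with
    | zero => rw [pow_zero, one_mulVec]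
    | succ m ih =>
      have h1 : x (m + 1) - xstar = T *ᵥ (x m - xstar) := by
        rw [hx m]
        conv_lhs => rw [← hfix]
        rw [mulVec_sub]
        abel
      rw [h1, ih, mulVec_mulVec, ← pow_succ']
  set Q : Matrix (Fin p) (Fin p) ℝ := ∑ i : Fin k, c i • T ^ (i : ℕ) with hQdef
  set P : Matrix (Fin p) (Fin p) ℝ := ∑ i : Fin k, c i • S ^ (i : ℕ) with hPdef
  -- the combined error
  have hsum : (∑ i : Fin k, c i • x i) - xstar = Q *ᵥ w := by
    have h1 : (∑ i : Fin k, c i • x i) - xstar = ∑ i : Fin k, c i • (x i - xstar) := by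
      simp_rw [smul_sub]
      rw [Finset.sum_sub_distrib, ← Finset.sum_smul, hc, one_smul]
    rw [h1, hQdef, aux_sum_mulVec]
    refine Finset.sum_congr rfl fun i _ => ?_
    rw [herr i, smul_mulVec]
  -- commutation
  have hcomm : (T - 1) * Q = Q * (T - 1) := by
    have h1 : Commute T Q :=
      Commute.sum_right _ _ _ fun i _ => ((Commute.refl T).pow_right _).smul_right _
    exact ((h1.sub_left (Commute.one_left Q))).eq
  set u : Fin p → ℝ := (T - 1) *ᵥ w with hu
  -- powers of T in terms of S
  have hBR : B * R = 1 := Matrix.mul_nonsing_inv B hdet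
  have hRB : R * B = 1 := Matrix.nonsing_inv_mul B hdet
  have hpow : ∀ i : ℕ, T ^ i = R * S ^ i * B := by
    intro i
    induction i with
    | zero => rw [pow_zero, pow_zero, Matrix.mul_one, hRB]
    | succ i ih =>
      rw [pow_succ, ih, hT, pow_succ]
      simp only [Matrix.mul_assoc]
      rw [← Matrix.mul_assoc B R, hBR, Matrix.one_mul]
  have hQ : Q = R * P * B := by
    rw [hQdef, hPdef, Finset.mul_sum, Finset.sum_mul]
    refine Finset.sum_congr rfl fun i _ => ?_
    rw [hpow, mul_smul_comm, smul_mul_assoc]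
  -- rewrite the LHS vector
  have hfin : (T - 1) *ᵥ ((∑ i : Fin k, c i • x i) - xstar) = R *ᵥ (P *ᵥ (B *ᵥ u)) := by
    rw [hsum, mulVec_mulVec, hcomm, ← mulVec_mulVec, ← hu, hQ, Matrix.mul_assoc,
      ← mulVec_mulVec, ← mulVec_mulVec]
  rw [hfin]
  have hcond : Real.sqrt (condNum hH.isHermitian) = Real.sqrt μmax / Real.sqrt μmin := by
    rw [condNum, ← hμmax, ← hμmin, Real.sqrt_div hμmaxnn]
  calc eNorm (R *ᵥ (P *ᵥ (B *ᵥ u)))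
      ≤ (Real.sqrt μmin)⁻¹ * eNorm (P *ᵥ (B *ᵥ u)) :=
        aux_sqrt_inv_mulVec_bound hH _ hμminpos
    _ ≤ (Real.sqrt μmin)⁻¹ * (opNorm P * eNorm (B *ᵥ u)) := by
        refine mul_le_mul_of_nonneg_left (aux_eNorm_mulVec_le _ _) ?_
        positivity
    _ ≤ (Real.sqrt μmin)⁻¹ * (opNorm P * (Real.sqrt μmax * eNorm u)) := by
        refine mul_le_mul_of_nonneg_left
          (mul_le_mul_of_nonneg_left (aux_sqrt_mulVec_bound hH u) (norm_nonneg _)) ?_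
        positivity
    _ = Real.sqrt (condNum hH.isHermitian) * opNorm P * eNorm u := by
        rw [hcond, div_eq_mul_inv]
        ring
end

section
/- Let S ∈ ℝ^{p×p} be symmetric positive semidefinite with spectral radius ρ = ρ(S) < 1, and let ζ = (1 - √(1-ρ))/(1 + √(1-ρ)). Then there exists a polynomial P of degree at most k-1 with P(1) = 1 (the rescaled shifted Chebyshev polynomial) such that ‖P(S)‖ ≤ 2ζ^{k-1}/(1 + ζ^{2(k-1)}). -/
lemma natDegree_T_le' : ∀ n : ℕ, (Polynomial.Chebyshev.T ℝ n).natDegree ≤ n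
  | 0 => by simp [Polynomial.Chebyshev.T_zero]
  | 1 => by simp [Polynomial.Chebyshev.T_one]
  | (n+2) => by
    have h1 := natDegree_T_le' (n+1)
    have h0 := natDegree_T_le' n
    rw [show ((n+2:ℕ):ℤ) = (n:ℤ)+2 by push_cast; ring, Polynomial.Chebyshev.T_add_two]
    refine le_trans (Polynomial.natDegree_sub_le _ _) (max_le ?_ (h0.trans (by omega)))
    refine le_trans (Polynomial.natDegree_mul_le) ?_
    have h2 : (2 * Polynomial.X : Polynomial ℝ).natDegree ≤ 1 :=
      le_trans Polynomial.natDegree_mul_le (by simp)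
    push_cast at h1
    omega

lemma T_eval_half' (z : ℝ) (hz : z ≠ 0) :
    ∀ n : ℕ, (Polynomial.Chebyshev.T ℝ n).eval ((z + z⁻¹)/2) = (z^n + z⁻¹^n)/2
  | 0 => by simp
  | 1 => by simp [Polynomial.Chebyshev.T_one]
  | (n+2) => by
    have h1 := T_eval_half' z hz (n+1)
    have h0 := T_eval_half' z hz n
    rw [show ((n+2:ℕ):ℤ) = (n:ℤ)+2 by push_cast; ring, Polynomial.Chebyshev.T_add_two]
    push_cast at h1 ⊢
    simp only [Polynomial.eval_sub, Polynomial.eval_mul, Polynomial.eval_ofNat,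
      Polynomial.eval_X, h1, h0]
    field_simp
    linear_combination z⁻¹ ^ n * (z - z⁻¹) * (mul_inv_cancel₀ hz)

lemma abs_T_eval_le_one' {x : ℝ} (hx₁ : -1 ≤ x) (hx₂ : x ≤ 1) (n : ℤ) :
    |(Polynomial.Chebyshev.T ℝ n).eval x| ≤ 1 := by
  have h := Polynomial.Chebyshev.T_real_cos (Real.arccos x) n
  rw [Real.cos_arccos hx₁ hx₂] at h
  rw [h]
  exact Real.abs_cos_le_one _

section MatrixLemmas

variable {p : ℕ}

/-- Conjugation by a unitary matrix as an algebra homomorphism. -/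
noncomputable def conjAH (U : Matrix (Fin p) (Fin p) ℝ)
    (h1 : U * star U = 1) (h2 : star U * U = 1) :
    Matrix (Fin p) (Fin p) ℝ →ₐ[ℝ] Matrix (Fin p) (Fin p) ℝ where
  toFun X := U * X * star U
  map_one' := by show U * 1 * star U = 1; rw [mul_one, h1]
  map_mul' a b := by
    show U * (a * b) * star U = (U * a * star U) * (U * b * star U)
    simp only [mul_assoc]
    rw [← mul_assoc (star U) U, h2, one_mul]
  map_zero' := by show U * 0 * star U = 0; rw [mul_zero, zero_mul]
  map_add' a b := by
    show U * (a + b) * star U = U * a * star U + U * b * star U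
    rw [mul_add, add_mul]
  commutes' r := by
    show U * (algebraMap ℝ _ r) * star U = algebraMap ℝ _ r
    rw [Algebra.algebraMap_eq_smul_one, mul_smul_comm, smul_mul_assoc, mul_one, h1]

lemma aeval_conj (U A : Matrix (Fin p) (Fin p) ℝ)
    (h1 : U * star U = 1) (h2 : star U * U = 1) (P : Polynomial ℝ) :
    Polynomial.aeval (U * A * star U) P = U * Polynomial.aeval A P * star U :=
  Polynomial.aeval_algHom_apply (conjAH U h1 h2) A P

/-- Diagonal embedding as an algebra homomorphism. -/
noncomputable def diagAH : (Fin p → ℝ) →ₐ[ℝ] Matrix (Fin p) (Fin p) ℝ :=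
  { Matrix.diagonalRingHom (Fin p) ℝ with
    commutes' := fun r => by
      ext i j
      simp [Matrix.diagonalRingHom, Matrix.algebraMap_eq_diagonal,
        Matrix.diagonal, Pi.algebraMap_apply]
      rfl }

lemma aeval_diag (d : Fin p → ℝ) (P : Polynomial ℝ) :
    Polynomial.aeval (Matrix.diagonal d) P
      = Matrix.diagonal (fun i => P.eval (d i)) := by
  have h : Polynomial.aeval ((diagAH : (Fin p → ℝ) →ₐ[ℝ] _) d) P
      = diagAH (Polynomial.aeval d P) := Polynomial.aeval_algHom_apply diagAH d P
  have hd : (diagAH : (Fin p → ℝ) →ₐ[ℝ] _) d = Matrix.diagonal d := rfl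
  rw [hd] at h
  have hpi : (Polynomial.aeval d P : Fin p → ℝ) = fun i => P.eval (d i) := by
    funext i
    have h2 := Polynomial.aeval_algHom_apply (Pi.evalAlgHom ℝ (fun _ : Fin p => ℝ) i) d P
    rw [show (Pi.evalAlgHom ℝ (fun _ : Fin p => ℝ) i) d = d i from rfl] at h2
    rw [show (Pi.evalAlgHom ℝ (fun _ : Fin p => ℝ) i) (Polynomial.aeval d P)
        = (Polynomial.aeval d P) i from rfl] at h2
    rw [← h2]
    exact congrFun (Polynomial.coe_aeval_eq_eval (d i)) P
  rw [h, show diagAH (Polynomial.aeval d P)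
      = Matrix.diagonal (Polynomial.aeval d P : Fin p → ℝ) from rfl, hpi]

set_option synthInstance.maxHeartbeats 1000000 in
set_option maxHeartbeats 1000000 in
lemma opNorm_conj_le (hp : 0 < p) (U M : Matrix (Fin p) (Fin p) ℝ)
    (hU : U ∈ Matrix.unitaryGroup (Fin p) ℝ) :
    opNorm (U * M * star U) ≤ opNorm M := by
  haveI : Nonempty (Fin p) := ⟨⟨0, hp⟩⟩
  haveI : Nontrivial (EuclideanSpace ℝ (Fin p)) :=
    (WithLp.equiv 2 (Fin p → ℝ)).nontrivial
  haveI : Nontrivial (EuclideanSpace ℝ (Fin p) →L[ℝ] EuclideanSpace ℝ (Fin p)) :=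
    ⟨1, 0, by
      intro h
      obtain ⟨x, hx⟩ := exists_ne (0 : EuclideanSpace ℝ (Fin p))
      have := congrFun (congrArg DFunLike.coe h) x
      simp at this
      exact hx this⟩
  set φ := Matrix.toEuclideanCLM (n := Fin p) (𝕜 := ℝ)
  have hU1 : U * star U = 1 := Matrix.mem_unitaryGroup_iff.mp hU
  have hU2 : star U * U = 1 := Matrix.mem_unitaryGroup_iff'.mp hU
  have hmem : φ U ∈ unitary (EuclideanSpace ℝ (Fin p) →L[ℝ] EuclideanSpace ℝ (Fin p)) := by
    constructor
    · rw [← map_star, ← map_mul, hU2, map_one]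
    · rw [← map_star, ← map_mul, hU1, map_one]
  have hnU : ‖φ U‖ = 1 := CStarRing.norm_of_mem_unitary hmem
  have hnUs : ‖φ (star U)‖ = 1 := by
    rw [map_star]
    exact CStarRing.norm_of_mem_unitary (Unitary.star_mem hmem)
  unfold opNorm
  rw [map_mul, map_mul]
  calc ‖φ U * φ M * φ (star U)‖ ≤ ‖φ U * φ M‖ * ‖φ (star U)‖ := norm_mul_le _ _
    _ ≤ ‖φ U‖ * ‖φ M‖ * ‖φ (star U)‖ :=
        mul_le_mul_of_nonneg_right (norm_mul_le _ _) (norm_nonneg _)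
    _ = ‖φ M‖ := by rw [hnU, hnUs, one_mul, mul_one]

lemma opNorm_diagonal_le (d : Fin p → ℝ) (b : ℝ) (hb : 0 ≤ b)
    (h : ∀ i, |d i| ≤ b) : opNorm (Matrix.diagonal d) ≤ b := by
  unfold opNorm
  refine ContinuousLinearMap.opNorm_le_bound _ hb (fun x => ?_)
  set φ := Matrix.toEuclideanCLM (n := Fin p) (𝕜 := ℝ)
  have hentry : ∀ i, (φ (Matrix.diagonal d) x) i = d i * x i := by
    intro i
    have := congrFun (Matrix.ofLp_toEuclideanCLM (Matrix.diagonal d) x) i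
    exact this.trans (by simp [Matrix.mulVec_diagonal])
  rw [EuclideanSpace.norm_eq, EuclideanSpace.norm_eq]
  have key : ∑ i, ‖(φ (Matrix.diagonal d) x) i‖ ^ 2 ≤ b ^ 2 * ∑ i, ‖x i‖ ^ 2 := by
    rw [Finset.mul_sum]
    refine Finset.sum_le_sum (fun i _ => ?_)
    rw [hentry i]
    have h1 : ‖d i * x i‖ = |d i| * ‖x i‖ := by
      simp [Real.norm_eq_abs, abs_mul]
    rw [h1, mul_pow]
    have h2 := h i
    have : |d i| ^ 2 ≤ b ^ 2 := by
      have := abs_nonneg (d i)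
      nlinarith
    exact mul_le_mul_of_nonneg_right this (sq_nonneg _)
  calc Real.sqrt (∑ i, ‖(φ (Matrix.diagonal d) x) i‖ ^ 2)
      ≤ Real.sqrt (b ^ 2 * ∑ i, ‖x i‖ ^ 2) := Real.sqrt_le_sqrt key
    _ = b * Real.sqrt (∑ i, ‖x i‖ ^ 2) := by
        rw [Real.sqrt_mul (sq_nonneg b), Real.sqrt_sq hb]

end MatrixLemmas

/-- Chebyshev-type bound: for `S` symmetric positive semidefinite with spectral radius
`ρ < 1`, there is a polynomial of degree at most `k - 1` taking value `1` at `1` with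
`‖P(S)‖ ≤ 2ζ^{k-1}/(1 + ζ^{2(k-1)})` where `ζ = (1 - √(1-ρ))/(1 + √(1-ρ))`. -/
theorem stmt_7 {p k : ℕ} (hp : 0 < p) (hk : 1 ≤ k)
    (S : Matrix (Fin p) (Fin p) ℝ) (hS : S.PosSemidef)
    (ρ : ℝ) (hρ : ρ = ⨆ i, hS.1.eigenvalues i) (hρ1 : ρ < 1)
    (ζ : ℝ) (hζ : ζ = (1 - Real.sqrt (1 - ρ)) / (1 + Real.sqrt (1 - ρ))) :
    ∃ P : Polynomial ℝ, P.natDegree ≤ k - 1 ∧ P.eval 1 = 1 ∧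
      opNorm (Polynomial.aeval S P) ≤ 2 * ζ ^ (k - 1) / (1 + ζ ^ (2 * (k - 1))) := by
  set n := k - 1 with hn
  have hH := hS.1
  set eig := hH.eigenvalues with heig
  have heig_nonneg : ∀ i, 0 ≤ eig i := fun i => hS.eigenvalues_nonneg i
  have hbdd : ∀ i, eig i ≤ ρ := by
    intro i
    rw [hρ]
    exact le_ciSup (Set.Finite.bddAbove (Set.finite_range _)) i
  have hρ0 : 0 ≤ ρ := le_trans (heig_nonneg ⟨0, hp⟩) (hbdd ⟨0, hp⟩)
  -- key norm bound via spectral theorem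
  have key : ∀ (P : Polynomial ℝ) (b : ℝ), 0 ≤ b →
      (∀ i, |P.eval (eig i)| ≤ b) → opNorm (Polynomial.aeval S P) ≤ b := by
    intro P b hb hPb
    have hUmem := (hH.eigenvectorUnitary).2
    have h1 : (hH.eigenvectorUnitary : Matrix (Fin p) (Fin p) ℝ) * star (hH.eigenvectorUnitary : Matrix (Fin p) (Fin p) ℝ) = 1 := by
      rw [Matrix.mem_unitaryGroup_iff] at hUmem; exact hUmem
    have h2 : star (hH.eigenvectorUnitary : Matrix (Fin p) (Fin p) ℝ) * (hH.eigenvectorUnitary : Matrix (Fin p) (Fin p) ℝ) = 1 := by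
      have h := (hH.eigenvectorUnitary).2
      rw [Matrix.mem_unitaryGroup_iff'] at h; exact h
    have hdecomp : Polynomial.aeval S P =
        (hH.eigenvectorUnitary : Matrix (Fin p) (Fin p) ℝ) *
          Matrix.diagonal (fun i => P.eval (eig i)) *
          star (hH.eigenvectorUnitary : Matrix (Fin p) (Fin p) ℝ) := by
      conv_lhs => rw [hH.spectral_theorem]
      have hdg : Matrix.diagonal (RCLike.ofReal ∘ hH.eigenvalues) = Matrix.diagonal eig := by
        rw [heig]; rfl
      rw [Unitary.conjStarAlgAut_apply, hdg, aeval_conj _ _ h1 h2, aeval_diag]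
    rw [hdecomp]
    exact (opNorm_conj_le hp _ _ (hH.eigenvectorUnitary).2).trans
      (opNorm_diagonal_le _ b hb hPb)
  rcases eq_or_lt_of_le hρ0 with hρz | hρpos
  · -- ρ = 0 : S has all eigenvalues 0
    have hz : ζ = 0 := by rw [hζ, ← hρz]; simp
    have heig0 : ∀ i, eig i = 0 := fun i => le_antisymm (hρz ▸ hbdd i) (heig_nonneg i)
    refine ⟨Polynomial.X ^ n, (Polynomial.natDegree_X_pow n).le,
      by rw [Polynomial.eval_pow, Polynomial.eval_X, one_pow], ?_⟩
    rcases Nat.eq_zero_or_pos n with hn0 | hn0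
    · -- k = 1 : P = 1, norm of identity
      rw [hn0, hz]
      simp only [pow_zero, map_one, mul_zero, pow_zero]
      haveI : Nonempty (Fin p) := ⟨⟨0, hp⟩⟩
      haveI : Nontrivial (EuclideanSpace ℝ (Fin p)) :=
        (WithLp.equiv 2 (Fin p → ℝ)).nontrivial
      have : opNorm (1 : Matrix (Fin p) (Fin p) ℝ) = 1 := by
        unfold opNorm
        rw [map_one]
        exact norm_one
      rw [this]
      norm_num
    · have hrhs : 2 * ζ ^ n / (1 + ζ ^ (2 * n)) = 0 := by
        rw [hz, zero_pow (by omega : n ≠ 0), zero_pow (by omega : 2 * n ≠ 0)]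
        norm_num
      rw [hrhs]
      refine key _ 0 le_rfl (fun i => ?_)
      rw [heig0 i, Polynomial.eval_pow, Polynomial.eval_X,
        zero_pow (by omega : n ≠ 0), abs_zero]
  · -- ρ > 0
    set s := Real.sqrt (1 - ρ) with hs
    have hs2 : s ^ 2 = 1 - ρ := Real.sq_sqrt (by linarith)
    have hs0 : 0 < s := Real.sqrt_pos.mpr (by linarith)
    have hs1 : s < 1 := by nlinarith
    have hζpos : 0 < ζ := by
      rw [hζ]
      apply div_pos <;> linarith
    have hζne : ζ ≠ 0 := ne_of_gt hζpos
    have hρne : ρ ≠ 0 := ne_of_gt hρpos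
    have hne1 : (1:ℝ) + s ≠ 0 := by positivity
    have hne2 : (1:ℝ) - s ≠ 0 := by intro h; linarith
    have hch : (ζ + ζ⁻¹) / 2 = (2 - ρ) / ρ := by
      rw [hζ, inv_div]
      field_simp
      linear_combination (4:ℝ) * hs2
    set c : ℝ := (1 + ζ ^ (2 * n)) / (2 * ζ ^ n) with hc
    have hcpos : 0 < c := by positivity
    have hTeval : (Polynomial.Chebyshev.T ℝ n).eval ((2 - ρ) / ρ) = c := by
      rw [← hch, T_eval_half' ζ hζne n, hc]
      rw [inv_pow]
      rw [div_eq_div_iff (by norm_num) (by positivity)]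
      field_simp
      rw [show 2 * n = n + n from two_mul n, pow_add]
      ring
    refine ⟨Polynomial.C c⁻¹ *
      ((Polynomial.Chebyshev.T ℝ n).comp (Polynomial.C (2 / ρ) * Polynomial.X - 1)), ?_, ?_, ?_⟩
    · refine le_trans Polynomial.natDegree_mul_le ?_
      rw [Polynomial.natDegree_C, zero_add]
      refine le_trans (Polynomial.natDegree_comp_le) ?_
      have hlin : (Polynomial.C (2 / ρ) * Polynomial.X - 1 : Polynomial ℝ).natDegree ≤ 1 := by
        refine le_trans (Polynomial.natDegree_sub_le _ _) ?_
        simp [Polynomial.natDegree_C_mul_le]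
        exact le_trans Polynomial.natDegree_mul_le (by simp)
      calc (Polynomial.Chebyshev.T ℝ n).natDegree *
            (Polynomial.C (2 / ρ) * Polynomial.X - 1 : Polynomial ℝ).natDegree
          ≤ n * 1 := Nat.mul_le_mul (natDegree_T_le' n) hlin
        _ = n := mul_one n
    · rw [Polynomial.eval_mul, Polynomial.eval_C, Polynomial.eval_comp]
      have : (Polynomial.C (2 / ρ) * Polynomial.X - 1 : Polynomial ℝ).eval 1 = (2 - ρ) / ρ := by
        simp only [Polynomial.eval_sub, Polynomial.eval_mul, Polynomial.eval_C,
          Polynomial.eval_X, Polynomial.eval_one]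
        field_simp
      rw [this, hTeval]
      exact inv_mul_cancel₀ (ne_of_gt hcpos)
    · have hrhs : 2 * ζ ^ n / (1 + ζ ^ (2 * n)) = c⁻¹ := by
        rw [hc, inv_div, mul_comm]
      rw [hrhs]
      refine key _ c⁻¹ (inv_pos.mpr hcpos).le (fun i => ?_)
      rw [Polynomial.eval_mul, Polynomial.eval_C, Polynomial.eval_comp]
      have hx : (Polynomial.C (2 / ρ) * Polynomial.X - 1 : Polynomial ℝ).eval (eig i)
          = 2 / ρ * eig i - 1 := by
        simp
      rw [hx, abs_mul, abs_of_pos (inv_pos.mpr hcpos)]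
      have hb1 : -1 ≤ 2 / ρ * eig i - 1 := by
        have : 0 ≤ 2 / ρ * eig i := mul_nonneg (by positivity) (heig_nonneg i)
        linarith
      have hb2 : 2 / ρ * eig i - 1 ≤ 1 := by
        have h1 : 2 / ρ * eig i ≤ 2 / ρ * ρ := by
          apply mul_le_mul_of_nonneg_left (hbdd i) (by positivity)
        rw [div_mul_cancel₀] at h1
        · linarith
        · exact hρne
      calc c⁻¹ * |(Polynomial.Chebyshev.T ℝ n).eval (2 / ρ * eig i - 1)|
          ≤ c⁻¹ * 1 := by
            apply mul_le_mul_of_nonneg_left (abs_T_eval_le_one' hb1 hb2 n) (inv_pos.mpr hcpos).le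
        _ = c⁻¹ := mul_one _
end
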